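/- Let T be an unstarred directed tree, i.e., there are no vertices u,v such that u has at least two incoming edges, v has at least two outgoing edges, and T has a directed path from u to v. Then every transitively biclosed reorientation of tc(T) is acyclic. -/

import Mathlib

/-- The reorientation of `tcT` with reversed edge set `rev`. -/
def reorient {V : Type*} (tcT rev : V → V → Prop) : V → V → Prop :=
  fun u v => (tcT u v ∧ ¬ rev u v) ∨ (tcT v u ∧ rev v u)

/-- A relation is acyclic if it has no directed cycle. -/
def AcyclicRel {V : Type*} (R : V → V → Prop) : Prop :=
  ∀ v, ¬ Relation.TransGen R v v

namespace UBA

variable {V : Type*}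

/-- A list is reduced if it never immediately backtracks. -/
def Red (L : List V) : Prop := ∀ x y z : V, [x, y, z] <:+: L → x ≠ z

theorem red_of_chain' {r : V → V → Prop} (hasymm : ∀ a b c : V, r a b → r b c → a ≠ c)
    {L : List V} (h : L.Chain' r) : Red L := by
  intro x y z hinf
  have h3 : List.Chain' r [x, y, z] := h.infix hinf
  simp only [List.Chain', List.isChain_cons_cons, List.isChain_singleton, and_true] at h3
  exact hasymm x y z h3.1 h3.2

theorem red_reverse {L : List V} (h : Red L) : Red L.reverse := by
  intro x y z hinf
  have : [z, y, x] <:+: L := by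
    have := (List.reverse_infix (l₁ := [x,y,z]) (l₂ := L.reverse)).symm
    have h2 : [x,y,z].reverse <:+: L.reverse.reverse := List.reverse_infix.mpr hinf
    simpa using h2
  exact (h z y x this).symm

theorem append_pair_inj {X Y : List V} {a b c d : V}
    (h : X ++ [a, b] = Y ++ [c, d]) : a = c ∧ b = d := by
  have := congrArg List.reverse h
  simp at this
  exact ⟨this.2.1, this.1⟩

theorem infix_triple_append {x y z : V} : ∀ {A B : List V}, [x, y, z] <:+: A ++ B →
    ([x, y, z] <:+: A) ∨ ([x, y, z] <:+: B) ∨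
    (∃ X Y, A = X ++ [x, y] ∧ B = z :: Y) ∨ (∃ X Y, A = X ++ [x] ∧ B = y :: z :: Y) := by
  intro A
  induction A with
  | nil => intro B h; simp at h; tauto
  | cons a A' ih =>
    intro B h
    rw [List.cons_append, List.infix_cons_iff] at h
    rcases h with h | h
    · -- prefix case
      obtain ⟨t, ht⟩ := h
      simp only [List.cons_append, List.cons.injEq] at ht
      obtain ⟨rfl, ht⟩ := ht
      -- A' ++ B = y :: z :: t  (as [y,z] ++ t)
      rcases List.append_eq_cons_iff.mp ht.symm with ⟨hA, hB⟩ | ⟨A'', hA, hrest⟩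
      · subst hA
        exact Or.inr (Or.inr (Or.inr ⟨[], t, by simp, by simpa using hB⟩))
      · rcases List.append_eq_cons_iff.mp hrest.symm with ⟨hA2, hB⟩ | ⟨A''', hA2, hrest2⟩
        · subst hA2
          refine Or.inr (Or.inr (Or.inl ⟨[], t, by simp [hA], by simpa using hB⟩))
        · left
          subst hA2 hA
          exact ⟨[], A''', by simp⟩
    · rcases ih h with h1 | h1 | ⟨X, Y, h1, h2⟩ | ⟨X, Y, h1, h2⟩
      · exact Or.inl (h1.trans ((List.suffix_cons a A').isInfix))
      · exact Or.inr (Or.inl h1)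
      · exact Or.inr (Or.inr (Or.inl ⟨a :: X, Y, by simp [h1], h2⟩))
      · exact Or.inr (Or.inr (Or.inr ⟨a :: X, Y, by simp [h1], h2⟩))

/-- Gluing two reduced walks along a common endpoint with distinct junction edges. -/
theorem red_glue {A B X B' : List V} {p c z : V}
    (hA : A = X ++ [p, c]) (hB : B = c :: z :: B') (hpz : p ≠ z)
    (hredA : Red A) (hredB : Red B) : Red (A ++ B.tail) := by
  intro x y w hinf
  rcases infix_triple_append hinf with h | h | ⟨X', Y', h1, h2⟩ | ⟨X', Y', h1, h2⟩
  · exact hredA x y w h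
  · refine hredB x y w (h.trans ?_)
    rw [hB]; exact (List.tail_suffix _).isInfix
  · -- junction triple: [x,y] at end of A, w at head of B.tail
    rw [hA] at h1
    obtain ⟨hx, hy⟩ := append_pair_inj h1.symm
    rw [hB] at h2
    simp only [List.tail_cons, List.cons.injEq] at h2
    obtain ⟨h2a, h2b⟩ := h2
    subst hx hy h2a
    exact hpz
  · -- triple starts at last of A = c, rest is start of B.tail: it's a prefix of B
    have hc : x = c := by
      have h3 : X' ++ [x] = X ++ [p, c] := by rw [← h1, ← hA]
      have := congrArg (fun L => List.getLast? L) h3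
      simpa using this
    subst hc
    refine hredB x y w ?_
    rw [hB] at h2 ⊢
    simp only [List.tail_cons] at h2
    rw [h2]
    exact ⟨[], Y', rfl⟩


open SimpleGraph

theorem reduced_isPath {V : Type*} {G : SimpleGraph V} (hG : G.IsAcyclic) :
    ∀ {u v : V} (w : G.Walk u v), w.edges.Chain' (· ≠ ·) → w.IsPath := by
  classical
  intro u v w
  induction w with
  | nil => intro _; simp
  | @cons u x v h w' ih =>
    intro hred
    have hred' : w'.edges.Chain' (· ≠ ·) := by
      rw [Walk.edges_cons] at hred; exact hred.tail
    have hw' : w'.IsPath := ih hred'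
    rw [Walk.cons_isPath_iff]
    refine ⟨hw', fun hmem => ?_⟩
    have hw1p : (w'.takeUntil u hmem).IsPath := hw'.takeUntil hmem
    by_cases he : s(u, x) ∈ (w'.takeUntil u hmem).edges
    · generalize hw1 : w'.takeUntil u hmem = w1 at *
      cases w1 with
      | nil => simp [Walk.edges_nil] at he
      | @cons x z u h2 w2 =>
        rw [Walk.edges_cons, List.mem_cons] at he
        rcases he with he | he
        · have hz : u = z := by
            rw [Sym2.eq_iff] at he
            rcases he with ⟨h1, h2⟩ | ⟨h1, h2⟩
            · exact absurd h1 h.ne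
            · exact h1
          subst hz
          -- first edge of w' is s(x,u), and hred says s(u,x) ≠ head of w'.edges
          have hspec := w'.take_spec hmem
          rw [hw1] at hspec
          have hedges := congrArg Walk.edges hspec
          rw [Walk.edges_append, Walk.edges_cons] at hedges
          have hredc : List.Chain' (· ≠ ·) (s(u, x) :: w'.edges) := by
            simpa using hred
          have hhead : s(x, u) ∈ w'.edges.head? := by rw [← hedges]; rfl
          exact (hredc.rel_head? hhead) Sym2.eq_swap
        · have : x ∈ w2.support := by
            rw [Sym2.eq_swap] at he
            exact w2.fst_mem_support_of_mem_edges he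
          rw [Walk.cons_isPath_iff] at hw1p
          exact hw1p.2 this
    · have hcyc : (Walk.cons h (w'.takeUntil u hmem)).IsCycle :=
        (Walk.cons_isCycle_iff _ h).mpr ⟨hw1p, he⟩
      exact hG _ hcyc


open SimpleGraph

variable {V : Type*}

theorem red_tail {L : List V} (h : Red L) : Red L.tail :=
  fun x y z hinf => h x y z (hinf.trans (List.tail_suffix L).isInfix)

def walkOfChain (G : SimpleGraph V) :
    ∀ (a : V) (l : List V), List.Chain G.Adj a l → G.Walk a ((a :: l).getLast (by simp))
  | _, [], _ => SimpleGraph.Walk.nil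
  | a, b :: l, h =>
    SimpleGraph.Walk.cons (List.chain_cons.mp h).1 (walkOfChain G b l (List.chain_cons.mp h).2)

theorem walkOfChain_support (G : SimpleGraph V) :
    ∀ (a : V) (l : List V) (h : List.Chain G.Adj a l), (walkOfChain G a l h).support = a :: l
  | _, [], _ => rfl
  | a, b :: l, h => by
    exact congrArg (a :: ·) (walkOfChain_support G b l _)

theorem walkOfChain_edges_chain' (G : SimpleGraph V) :
    ∀ (a : V) (l : List V) (h : List.Chain G.Adj a l), Red (a :: l) →
      (walkOfChain G a l h).edges.Chain' (· ≠ ·)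
  | _, [], _, _ => by simp [walkOfChain, List.Chain']
  | _, [_], h, _ => by simp [walkOfChain, List.Chain']
  | a, b :: c :: l, h, hred => by
    show List.Chain' _ (s(a, b) :: (walkOfChain G b (c :: l) _).edges)
    refine List.isChain_cons.mpr ⟨?_, walkOfChain_edges_chain' G b (c :: l) _ (red_tail hred)⟩
    intro e he
    change e ∈ (s(b, c) :: (walkOfChain G c l _).edges).head? at he
    simp only [List.head?_cons, Option.mem_some_iff] at he
    subst he
    have hac : a ≠ c := hred a b c ⟨[], l, rfl⟩
    have hab : a ≠ b := (List.chain_cons.mp h).1.ne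
    intro heq
    rw [Sym2.eq_iff] at heq
    rcases heq with ⟨rfl, rfl⟩ | ⟨h1, h2⟩
    · exact hac rfl
    · exact hac h1

theorem no_closed_red_chain {G : SimpleGraph V} (hG : G.IsAcyclic) {a : V} {l : List V}
    (h : List.Chain G.Adj a l) (hl : l ≠ []) (hlast : (a :: l).getLast (by simp) = a)
    (hred : Red (a :: l)) : False := by
  have hpath : ((walkOfChain G a l h).copy rfl hlast).IsPath :=
    reduced_isPath hG _ (by
      rw [Walk.edges_copy]; exact walkOfChain_edges_chain' G a l h hred)
  have hsup : ((walkOfChain G a l h).copy rfl hlast).support = a :: l := by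
    rw [Walk.support_copy, walkOfChain_support]
  have hnodup := hpath.support_nodup
  rw [hsup, List.nodup_cons] at hnodup
  apply hnodup.1
  rw [List.getLast_cons hl] at hlast
  rw [← hlast]
  exact List.getLast_mem hl


section part4
variable {V : Type*} {r : V → V → Prop}

/-- Unique-chain hypothesis for a relation. -/
def ChainUnique (r : V → V → Prop) : Prop :=
  ∀ L1 L2 : List V, L1 ≠ [] → L2 ≠ [] → L1.Chain' r → L2.Chain' r →
    L1.head? = L2.head? → L1.getLast? = L2.getLast? → L1 = L2

/-- the penultimate element of a list (with default) -/
def pen (L : List V) (d : V) : V := L.dropLast.getLastD d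

theorem pen_append_pair (X : List V) (p q d : V) : pen (X ++ [p, q]) d = p := by
  have h : X ++ [p, q] = (X ++ [p]) ++ [q] := by simp
  rw [pen, h, List.dropLast_concat]
  exact List.getLastD_concat

theorem decomp_two : ∀ {L : List V}, 2 ≤ L.length → ∃ X p q, L = X ++ ([p, q] : List V)
  | [], h => by simp at h
  | [x], h => by simp at h
  | [x, y], _ => ⟨[], x, y, rfl⟩
  | x :: y :: z :: M, _ => by
    obtain ⟨X, p, q, hX⟩ := decomp_two (L := y :: z :: M) (by simp)
    exact ⟨x :: X, p, q, by rw [List.cons_append, ← hX]⟩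

theorem pen_reverse (x y : V) (M : List V) (d : V) : pen ((x :: y :: M).reverse) d = y := by
  have h : (x :: y :: M).reverse = M.reverse ++ [y, x] := by simp
  rw [h, pen_append_pair]

noncomputable def pl {u v : V} (h : Relation.ReflTransGen r u v) : List V :=
  u :: (List.exists_isChain_cons_of_relationReflTransGen h).choose

theorem pl_ne {u v : V} (h : Relation.ReflTransGen r u v) : pl h ≠ [] := by
  simp [pl]

theorem pl_cons {u v : V} (h : Relation.ReflTransGen r u v) : pl h = u :: (pl h).tail := rfl

theorem pl_chain' {u v : V} (h : Relation.ReflTransGen r u v) : (pl h).Chain' r :=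
  (List.exists_isChain_cons_of_relationReflTransGen h).choose_spec.1

theorem pl_head {u v : V} (h : Relation.ReflTransGen r u v) : (pl h).head? = some u := rfl

theorem pl_getLast {u v : V} (h : Relation.ReflTransGen r u v) :
    (pl h).getLast (pl_ne h) = v :=
  (List.exists_isChain_cons_of_relationReflTransGen h).choose_spec.2

theorem pl_getLast? {u v : V} (h : Relation.ReflTransGen r u v) : (pl h).getLast? = some v := by
  rw [List.getLast?_eq_getLast (pl_ne h), pl_getLast]

theorem last_mem_pl {u v : V} (h : Relation.ReflTransGen r u v) : v ∈ pl h := by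
  have := List.getLast_mem (pl_ne h)
  rwa [pl_getLast h] at this

theorem head_eq_of_ne_nil {L : List V} {x : V} (hL : L ≠ []) (hh : L.head? = some x) :
    L = x :: L.tail := by
  cases L with
  | nil => exact absurd rfl hL
  | cons a t => simp at hh; subst hh; rfl

theorem rtg_of_chain' {L : List V} {x y : V} (hc : L.Chain' r) (hL : L ≠ [])
    (hh : L.head? = some x) (hl : L.getLast? = some y) : Relation.ReflTransGen r x y := by
  have h1 : L = x :: L.tail := head_eq_of_ne_nil hL hh
  apply List.relationReflTransGen_of_exists_isChain_cons L.tail (by rw [h1] at hc; exact hc)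
  rw [h1] at hl
  rw [List.getLast?_eq_getLast (by simp)] at hl
  simpa using hl

theorem rtg_of_prefix {u v x : V} (h : Relation.ReflTransGen r u v)
    {L1 L2 : List V} (hL : pl h = L1 ++ x :: L2) : Relation.ReflTransGen r u x := by
  apply rtg_of_chain' (L := L1 ++ [x]) ((pl_chain' h).prefix (by rw [hL]; exact ⟨L2, by simp⟩))
    (by simp)
  · have h2 := pl_head h
    rw [hL] at h2
    cases L1 with
    | nil => simpa using h2
    | cons a t => simpa using h2
  · simp

theorem rtg_of_suffix {u v x : V} (h : Relation.ReflTransGen r u v)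
    {L1 L2 : List V} (hL : pl h = L1 ++ x :: L2) : Relation.ReflTransGen r x v := by
  apply rtg_of_chain' (L := x :: L2) ((pl_chain' h).suffix (by rw [hL]; exact ⟨L1, rfl⟩))
    (by simp) (by simp)
  have h2 := pl_getLast? h
  rw [hL, List.getLast?_append_of_ne_nil _ (by simp)] at h2
  exact h2

theorem mem_pl_rtg {u v x : V} (h : Relation.ReflTransGen r u v) (hx : x ∈ pl h) :
    Relation.ReflTransGen r u x ∧ Relation.ReflTransGen r x v := by
  obtain ⟨L1, L2, hL⟩ := List.append_of_mem hx
  exact ⟨rtg_of_prefix h hL, rtg_of_suffix h hL⟩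

theorem pl_unique (HU : ChainUnique r) {u v : V} (h : Relation.ReflTransGen r u v)
    {L : List V} (hL : L ≠ []) (hc : L.Chain' r) (hh : L.head? = some u)
    (hl : L.getLast? = some v) : L = pl h :=
  HU L (pl h) hL (pl_ne h) hc (pl_chain' h) (by rw [hh, pl_head]) (by rw [hl, pl_getLast?])

theorem pl_concat (HU : ChainUnique r) {u v w : V} (huv : Relation.ReflTransGen r u v)
    (hvw : Relation.ReflTransGen r v w) :
    pl (huv.trans hvw) = pl huv ++ (pl hvw).tail := by
  symm
  apply pl_unique HU
  · intro hcon
    exact (pl_ne huv) (List.append_eq_nil_iff.mp hcon).1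
  · apply (pl_chain' huv).append ((pl_chain' hvw).tail)
    intro a ha b hb
    rw [pl_getLast? huv] at ha
    simp only [Option.mem_some_iff] at ha
    subst ha
    have hch := pl_chain' hvw
    rw [pl_cons hvw] at hch
    exact (List.isChain_cons.mp hch).1 b hb
  · rw [head_eq_of_ne_nil (pl_ne huv) (pl_head huv)]
    simp
  · cases htail : (pl hvw).tail with
    | nil =>
      have hvw2 : v = w := by
        have h1 := pl_getLast? hvw
        rw [pl_cons hvw, htail] at h1
        simpa using h1
      subst hvw2
      rw [List.append_nil, pl_getLast?]
    | cons b t =>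
      rw [List.getLast?_append_of_ne_nil _ (by simp)]
      have h1 := pl_getLast? hvw
      rw [pl_cons hvw, htail, List.getLast?_cons_cons] at h1
      exact h1

theorem first_mem {L : List V} (P : V → Prop) (h : ∃ x ∈ L, P x) :
    ∃ L1 m L2, L = L1 ++ m :: L2 ∧ P m ∧ ∀ y ∈ L1, ¬ P y := by
  classical
  induction L with
  | nil => simp at h
  | cons a L ih =>
    by_cases ha : P a
    · exact ⟨[], a, L, rfl, ha, by simp⟩
    · obtain ⟨x, hx, hPx⟩ := h
      rcases List.mem_cons.mp hx with rfl | hx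
      · exact absurd hPx ha
      · obtain ⟨L1, m, L2, hL, hPm, hL1⟩ := ih ⟨x, hx, hPx⟩
        refine ⟨a :: L1, m, L2, by rw [List.cons_append, hL], hPm, ?_⟩
        intro y hy
        rcases List.mem_cons.mp hy with rfl | hy
        · exact ha
        · exact hL1 y hy

theorem merge_lemma (HU : ChainUnique r) {u v c : V}
    (hu : Relation.ReflTransGen r u c) (hv : Relation.ReflTransGen r v c)
    (h1 : u ∉ pl hv) (h2 : v ∉ pl hu) :
    ∃ (m : V) (hum : Relation.ReflTransGen r u m) (hvm : Relation.ReflTransGen r v m),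
      m ∈ pl hu ∧ m ∈ pl hv ∧
      pen (pl hum) m ≠ pen (pl hvm) m ∧
      r (pen (pl hum) m) m ∧ r (pen (pl hvm) m) m := by
  classical
  obtain ⟨L1, m, L2, hL, hm, hL1⟩ := first_mem (· ∈ pl hv)
    ⟨c, last_mem_pl hu, last_mem_pl hv⟩
  have hmu : m ∈ pl hu := by rw [hL]; simp
  have hmnu : m ≠ u := fun h => h1 (h ▸ hm)
  have hL1ne : L1 ≠ [] := by
    intro h
    rw [h] at hL
    have h3 := pl_head hu
    rw [hL] at h3
    simp at h3
    exact hmnu h3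
  have hum : Relation.ReflTransGen r u m := rtg_of_prefix hu hL
  have hpre : L1 ++ [m] = pl hum := by
    apply pl_unique HU
    · simp
    · exact (pl_chain' hu).prefix (by rw [hL]; exact ⟨L2, by simp⟩)
    · have h3 := pl_head hu
      rw [hL] at h3
      cases L1 with
      | nil => exact absurd rfl hL1ne
      | cons a t => simpa using h3
    · simp
  -- v side
  obtain ⟨M1, mm, M2, hM0, hmm, hM1⟩ := first_mem (· = m) ⟨m, hm, rfl⟩
  have hM : pl hv = M1 ++ m :: M2 := by rw [← hmm]; exact hM0
  have hvm : Relation.ReflTransGen r v m := rtg_of_prefix hv hM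
  have hM1ne : M1 ≠ [] := by
    intro h
    rw [h] at hM
    have h3 := pl_head hv
    rw [hM] at h3
    simp at h3
    exact h2 (h3 ▸ hmu)
  have hpreM : M1 ++ [m] = pl hvm := by
    apply pl_unique HU
    · simp
    · exact (pl_chain' hv).prefix (by rw [hM]; exact ⟨M2, by simp⟩)
    · have h3 := pl_head hv
      rw [hM] at h3
      cases M1 with
      | nil => exact absurd rfl hM1ne
      | cons a t => simpa using h3
    · simp
  obtain ⟨X, p, hX⟩ : ∃ X p, L1 = X ++ [p] := ⟨L1.dropLast, L1.getLast hL1ne,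
    (List.dropLast_append_getLast hL1ne).symm⟩
  obtain ⟨Y, q, hY⟩ : ∃ Y q, M1 = Y ++ [q] := ⟨M1.dropLast, M1.getLast hM1ne,
    (List.dropLast_append_getLast hM1ne).symm⟩
  have hpen1 : pen (pl hum) m = p := by
    rw [← hpre, hX, List.append_assoc]
    exact pen_append_pair X p m m
  have hpen2 : pen (pl hvm) m = q := by
    rw [← hpreM, hY, List.append_assoc]
    exact pen_append_pair Y q m m
  have hpnotin : p ∉ pl hv := hL1 p (by rw [hX]; simp)
  have hqin : q ∈ pl hv := by rw [hM, hY]; simp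
  refine ⟨m, hum, hvm, hmu, hm, ?_, ?_, ?_⟩
  · rw [hpen1, hpen2]
    intro h
    exact hpnotin (h ▸ hqin)
  · rw [hpen1]
    have hc2 : List.Chain' r [p, m] := (pl_chain' hum).suffix (by
      rw [← hpre, hX, List.append_assoc]; exact ⟨X, by simp⟩)
    exact List.isChain_pair.mp hc2
  · rw [hpen2]
    have hc2 : List.Chain' r [q, m] := (pl_chain' hvm).suffix (by
      rw [← hpreM, hY, List.append_assoc]; exact ⟨Y, by simp⟩)
    exact List.isChain_pair.mp hc2

theorem pl_len_two {u v : V} (h : Relation.ReflTransGen r u v) (hne : u ≠ v) :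
    2 ≤ (pl h).length := by
  rcases hpl : pl h with _ | ⟨a, _ | ⟨b, t⟩⟩
  · exact absurd hpl (pl_ne h)
  · exfalso
    apply hne
    have h1 := pl_head h
    have h2 := pl_getLast? h
    rw [hpl] at h1 h2
    simp at h1 h2
    rw [← h1, ← h2]
  · simp

theorem pen_compat (HU : ChainUnique r) {u s m : V}
    (hus : Relation.ReflTransGen r u s) (hsm : Relation.ReflTransGen r s m) (hne : s ≠ m) :
    pen (pl (hus.trans hsm)) m = pen (pl hsm) m := by
  obtain ⟨Z, p, q, hZ⟩ := decomp_two (pl_len_two hsm hne)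
  have hq : q = m := by
    have h1 := pl_getLast? hsm
    rw [hZ, List.getLast?_append_of_ne_nil _ (by simp)] at h1
    simpa using h1
  rw [hq] at hZ
  rw [pl_concat HU hus hsm]
  have hpen2 : pen (pl hsm) m = p := by rw [hZ]; exact pen_append_pair Z p m m
  rw [hpen2]
  cases Z with
  | nil =>
    simp only [List.nil_append] at hZ
    have hp : p = s := by
      have h1 := pl_head hsm
      rw [hZ] at h1
      simpa using h1
    rw [hZ]
    simp only [List.tail_cons]
    rw [hp]
    have hdl : pl hus = (pl hus).dropLast ++ [s] := by
      have h1 := List.dropLast_append_getLast (pl_ne hus)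
      rw [pl_getLast hus] at h1
      exact h1.symm
    rw [hdl, List.append_assoc]
    exact pen_append_pair _ s m m
  | cons z Z' =>
    rw [hZ]
    simp only [List.cons_append, List.tail_cons]
    rw [← List.append_assoc]
    exact pen_append_pair _ p m m

end part4
section part4b
variable {V : Type*} {r : V → V → Prop}

theorem pl_irrel {u v : V} (h1 h2 : Relation.ReflTransGen r u v) : pl h1 = pl h2 := rfl

theorem choose_congr {α : Sort*} {p q : α → Prop} (h : ∀ x, p x = q x)
    (hp : ∃ x, p x) (hq : ∃ x, q x) : hp.choose = hq.choose := by
  have hpq : p = q := funext h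
  subst hpq
  rfl

theorem rtg_head_mem {L : List V} (hc : L.Chain' r) {x0 y : V}
    (hh : L.head? = some x0) (hy : y ∈ L) : Relation.ReflTransGen r x0 y := by
  obtain ⟨A, B, hL⟩ := List.append_of_mem hy
  subst hL
  apply rtg_of_chain' (L := A ++ [y]) (hc.prefix ⟨B, by simp⟩) (by simp)
  · cases A with
    | nil => simpa using hh
    | cons c t => simpa using hh
  · simp

theorem rtg_mem_last {L : List V} (hc : L.Chain' r) {y v : V}
    (hl : L.getLast? = some v) (hy : y ∈ L) : Relation.ReflTransGen r y v := by
  obtain ⟨A, B, hL⟩ := List.append_of_mem hy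
  subst hL
  apply rtg_of_chain' (L := y :: B) (hc.suffix ⟨A, rfl⟩) (by simp) (by simp)
  rwa [List.getLast?_append_of_ne_nil _ (by simp)] at hl

theorem mem_order {u v x y : V} (h : Relation.ReflTransGen r u v)
    (hx : x ∈ pl h) (hy : y ∈ pl h) :
    Relation.ReflTransGen r x y ∨ Relation.ReflTransGen r y x := by
  obtain ⟨L1, L2, hL⟩ := List.append_of_mem hx
  rw [hL] at hy
  rcases List.mem_append.mp hy with hy | hy
  · right
    apply rtg_mem_last (L := L1 ++ [x]) ((pl_chain' h).prefix (by rw [hL]; exact ⟨L2, by simp⟩))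
      (by simp) (by simp [hy])
  · left
    exact rtg_head_mem (L := x :: L2) ((pl_chain' h).suffix (by rw [hL]; exact ⟨L1, rfl⟩))
      (by simp) hy

theorem decomp_pen {L : List V} (h2 : 2 ≤ L.length) {v : V} (hl : L.getLast? = some v) (d : V) :
    ∃ X, L = X ++ [pen L d, v] := by
  obtain ⟨X, p, q, hX⟩ := decomp_two h2
  have hq : q = v := by
    rw [hX, List.getLast?_append_of_ne_nil _ (by simp)] at hl
    simpa using hl
  subst hq
  refine ⟨X, ?_⟩
  rw [hX, pen_append_pair]

theorem decomp_second {L : List V} (h2 : 2 ≤ L.length) {x0 : V} (hh : L.head? = some x0)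
    (d : V) : ∃ M, L = x0 :: pen L.reverse d :: M := by
  match L, h2 with
  | x :: y :: M, _ =>
    have hx : x = x0 := by simpa using hh
    subst hx
    exact ⟨M, by rw [pen_reverse]⟩

theorem decomp_reverse {L : List V} (h2 : 2 ≤ L.length) {v : V} (hl : L.getLast? = some v)
    (d : V) : ∃ M, L.reverse = v :: pen L d :: M := by
  obtain ⟨X, hX⟩ := decomp_pen h2 hl d
  refine ⟨X.reverse, ?_⟩
  generalize hp : pen L d = p at hX ⊢
  rw [hX]
  simp

theorem decomp_reverse_end {L : List V} (h2 : 2 ≤ L.length) {x0 : V} (hh : L.head? = some x0)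
    (d : V) : ∃ X, L.reverse = X ++ [pen L.reverse d, x0] := by
  obtain ⟨M, hM⟩ := decomp_second h2 hh d
  refine ⟨M.reverse, ?_⟩
  generalize hp : pen L.reverse d = p at hM ⊢
  rw [hM]
  simp

theorem append_tail_eq {A B : List V} (hA : A ≠ []) (h : A.getLast? = B.head?) :
    A ++ B.tail = A.dropLast ++ B := by
  cases B with
  | nil =>
    rw [List.getLast?_eq_getLast hA] at h
    simp at h
  | cons c B' =>
    have hlast : A.getLast hA = c := by
      rw [List.getLast?_eq_getLast hA] at h
      simpa using h
    conv_lhs => rw [← List.dropLast_append_getLast hA, hlast]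
    simp

end part4b
section part4c
variable {V : Type*} {r : V → V → Prop}

theorem pen_rel {u v : V} (h : Relation.ReflTransGen r u v) (hne : u ≠ v) :
    r (pen (pl h) v) v := by
  obtain ⟨Z, hZ⟩ := decomp_pen (pl_len_two h hne) (pl_getLast? h) v
  exact List.isChain_pair.mp ((pl_chain' h).suffix ⟨Z, hZ.symm⟩)

theorem head?_append_left {A C : List V} (hA : A ≠ []) : (A ++ C).head? = A.head? := by
  cases A with
  | nil => exact absurd rfl hA
  | cons a t => rfl

end part4c
section part5
open SimpleGraph
variable {V : Type*} {T : V → V → Prop}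

theorem hne_of_irr (hirr : ∀ v, ¬ T v v) {x y : V} (h : T x y) : x ≠ y :=
  fun heq => hirr y (heq ▸ h)

theorem adj_of_S (hirr : ∀ v, ¬ T v v) {x y : V} (h : T x y ∨ T y x) :
    (SimpleGraph.fromRel T).Adj x y := by
  rw [SimpleGraph.fromRel_adj]
  refine ⟨?_, h⟩
  rcases h with h | h
  · exact hne_of_irr hirr h
  · exact (hne_of_irr hirr h).symm

theorem red_of_chainT (hirr : ∀ v, ¬ T v v) (hasymm : ∀ u v, T u v → ¬ T v u)
    {L : List V} (h : L.Chain' T) : Red L :=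
  red_of_chain' (fun a b c hab hbc heq => hasymm a b hab (heq ▸ hbc)) h

theorem chainUnique_T (htree : (SimpleGraph.fromRel T).IsTree)
    (hirr : ∀ v, ¬ T v v) (hasymm : ∀ u v, T u v → ¬ T v u) : ChainUnique T := by
  intro L1 L2 h1 h2 hc1 hc2 hh hl
  obtain ⟨a, l1, rfl⟩ : ∃ a l, L1 = a :: l := by
    cases L1 with
    | nil => exact absurd rfl h1
    | cons a l => exact ⟨a, l, rfl⟩
  obtain ⟨a2, l2, rfl⟩ : ∃ a l, L2 = a :: l := by
    cases L2 with
    | nil => exact absurd rfl h2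
    | cons a l => exact ⟨a, l, rfl⟩
  have ha : a2 = a := by simp at hh; exact hh.symm
  rw [ha] at hc2 hl ⊢
  have hadj1 : List.Chain (SimpleGraph.fromRel T).Adj a l1 :=
    List.Chain.imp (fun x y hxy => adj_of_S hirr (Or.inl hxy)) hc1
  have hadj2 : List.Chain (SimpleGraph.fromRel T).Adj a l2 :=
    List.Chain.imp (fun x y hxy => adj_of_S hirr (Or.inl hxy)) hc2
  have hlast : (a :: l2).getLast (by simp) = (a :: l1).getLast (by simp) := by
    rw [List.getLast?_eq_getLast (by simp), List.getLast?_eq_getLast (by simp)] at hl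
    simpa using hl.symm
  have hp1 : (walkOfChain _ a l1 hadj1).IsPath :=
    reduced_isPath htree.IsAcyclic _
      (walkOfChain_edges_chain' _ a l1 hadj1 (red_of_chainT hirr hasymm hc1))
  have hp2 : ((walkOfChain _ a l2 hadj2).copy rfl hlast).IsPath := by
    rw [Walk.isPath_copy]
    exact reduced_isPath htree.IsAcyclic _
      (walkOfChain_edges_chain' _ a l2 hadj2 (red_of_chainT hirr hasymm hc2))
  have := SimpleGraph.isAcyclic_iff_path_unique.mp htree.IsAcyclic
    ⟨walkOfChain _ a l1 hadj1, hp1⟩ ⟨(walkOfChain _ a l2 hadj2).copy rfl hlast, hp2⟩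
  have hval := congrArg (fun p : (SimpleGraph.fromRel T).Path a _ => p.1.support) this
  simp only [Walk.support_copy] at hval
  rw [walkOfChain_support, walkOfChain_support] at hval
  simpa using hval

theorem chainUnique_flip (hT : ChainUnique T) : ChainUnique (flip T) := by
  intro L1 L2 h1 h2 hc1 hc2 hh hl
  have := hT L1.reverse L2.reverse (by simpa using h1) (by simpa using h2)
    (List.isChain_reverse.mpr hc1) (List.isChain_reverse.mpr hc2)
    (by rwa [List.head?_reverse, List.head?_reverse])
    (by rwa [List.getLast?_reverse, List.getLast?_reverse])
  exact List.reverse_injective this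

theorem pl_flip_eq (hT : ChainUnique T) {u v : V} (h : Relation.ReflTransGen T u v)
    (h' : Relation.ReflTransGen (flip T) v u) : pl h' = (pl h).reverse := by
  symm
  apply pl_unique (chainUnique_flip hT)
  · simp [pl_ne h]
  · exact List.isChain_reverse.mpr (pl_chain' h)
  · rw [List.head?_reverse, pl_getLast?]
  · rw [List.getLast?_reverse, pl_head]

theorem closed_contradiction (htree : (SimpleGraph.fromRel T).IsTree)
    (hirr : ∀ v, ¬ T v v) {W : List V} {s0 : V}
    (hc : W.Chain' (fun x y => T x y ∨ T y x)) (hh : W.head? = some s0)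
    (hl : W.getLast? = some s0) (hlen : 2 ≤ W.length) (hred : Red W) : False := by
  obtain ⟨l, rfl⟩ : ∃ l, W = s0 :: l := by
    cases W with
    | nil => simp at hh
    | cons a l => simp at hh; exact ⟨l, by rw [hh]⟩
  have hadj : List.Chain (SimpleGraph.fromRel T).Adj s0 l :=
    List.Chain.imp (fun x y hxy => adj_of_S hirr hxy) hc
  have hlne : l ≠ [] := by
    intro h; rw [h] at hlen; simp at hlen
  apply no_closed_red_chain htree.IsAcyclic hadj hlne _ hred
  rw [List.getLast?_eq_getLast (by simp)] at hl
  simpa using hl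

end part5
section part6
open Relation
variable {V : Type*} {T : V → V → Prop}

/-- merge data predicate -/
def MD (T : V → V → Prop) (u v c x : V) : Prop :=
  ∃ (hu : Relation.ReflTransGen T u c) (hv : Relation.ReflTransGen T v c)
    (hum : Relation.ReflTransGen T u x) (hvm : Relation.ReflTransGen T v x),
    x ∈ pl hu ∧ x ∈ pl hv ∧ pen (pl hum) x ≠ pen (pl hvm) x ∧
    T (pen (pl hum) x) x ∧ T (pen (pl hvm) x) x

theorem tree_part (htree : (SimpleGraph.fromRel T).IsTree)
    (hirr : ∀ v, ¬ T v v) (hasymm : ∀ u v, T u v → ¬ T v u)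
    (hunstarred : ¬ ∃ u v a b d e : V, a ≠ b ∧ T a u ∧ T b u ∧ d ≠ e ∧ T v d ∧ T v e ∧
      Relation.ReflTransGen T u v)
    (k : ℕ) (hk : 1 ≤ k) (a b : ℕ → V)
    (hpa : ∀ i, a (i + k) = a i) (hpb : ∀ i, b (i + k) = b i)
    (D1 : ∀ i, ReflTransGen T (a i) (b i))
    (D2 : ∀ i, ReflTransGen T (a (i + 1)) (b i))
    (D3 : ∀ i, ¬ ReflTransGen T (a i) (a (i + 1)) ∧ ¬ ReflTransGen T (a (i + 1)) (a i))
    (D4 : ∀ i, ¬ ReflTransGen T (b i) (b (i + 1)) ∧ ¬ ReflTransGen T (b (i + 1)) (b i)) :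
    False := by
  have HU : ChainUnique T := chainUnique_T htree hirr hasymm
  have HUf : ChainUnique (flip T) := chainUnique_flip HU
  have swap2 : ∀ i, ReflTransGen (flip T) (b i) (a (i+1)) := fun i => (D2 i).swap
  have swap1 : ∀ i, ReflTransGen (flip T) (b (i+1)) (a (i+1)) := fun i => (D1 (i+1)).swap
  -- merge points at the peaks
  have hMD : ∀ i, ∃ x, MD T (a i) (a (i+1)) (b i) x := by
    intro i
    obtain ⟨x, hum, hvm, h1, h2, h3, h4, h5⟩ := merge_lemma HU (D1 i) (D2 i)
      (fun hmem => (D3 i).2 (mem_pl_rtg (D2 i) hmem).1)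
      (fun hmem => (D3 i).1 (mem_pl_rtg (D1 i) hmem).1)
    exact ⟨x, D1 i, D2 i, hum, hvm, h1, h2, h3, h4, h5⟩
  set m : ℕ → V := fun i => (hMD i).choose with hm_def
  have hMDs : ∀ i, MD T (a i) (a (i+1)) (b i) (m i) := fun i => (hMD i).choose_spec
  -- split points at the valleys
  have hSD : ∀ i, ∃ x, MD (flip T) (b i) (b (i+1)) (a (i+1)) x := by
    intro i
    obtain ⟨x, hum, hvm, h1, h2, h3, h4, h5⟩ := merge_lemma HUf (swap2 i) (swap1 i)
      (fun hmem => by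
        rw [pl_flip_eq HU (D1 (i+1)) (swap1 i), List.mem_reverse] at hmem
        exact (D4 i).1 (mem_pl_rtg (D1 (i+1)) hmem).2)
      (fun hmem => by
        rw [pl_flip_eq HU (D2 i) (swap2 i), List.mem_reverse] at hmem
        exact (D4 i).2 (mem_pl_rtg (D2 i) hmem).2)
    exact ⟨x, swap2 i, swap1 i, hum, hvm, h1, h2, h3, h4, h5⟩
  set s : ℕ → V := fun i => (hSD i).choose with hs_def
  have hSDs : ∀ i, MD (flip T) (b i) (b (i+1)) (a (i+1)) (s i) := fun i => (hSD i).choose_spec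
  -- periodicity of the split points
  have hsper : s k = s 0 := by
    apply choose_congr
    intro x
    have e1 : b k = b 0 := by have := hpb 0; simpa using this
    have e2 : b (k+1) = b 1 := by have := hpb 1; rw [← this]; congr 1; omega
    have e3 : a (k+1) = a 1 := by have := hpa 1; rw [← this]; congr 1; omega
    rw [e1, e2, e3]
  -- membership facts
  have hmP : ∀ i, m i ∈ pl (D1 i) := fun i => by
    obtain ⟨hu, hv, hum, hvm, h1, h2, h3, h4, h5⟩ := hMDs i; exact h1
  have hmQ : ∀ i, m i ∈ pl (D2 i) := fun i => by
    obtain ⟨hu, hv, hum, hvm, h1, h2, h3, h4, h5⟩ := hMDs i; exact h2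
  have hsQ : ∀ i, s i ∈ pl (D2 i) := fun i => by
    obtain ⟨hu, hv, hum, hvm, h1, h2, h3, h4, h5⟩ := hSDs i
    have h1' : s i ∈ pl (swap2 i) := h1
    rw [pl_flip_eq HU (D2 i) (swap2 i), List.mem_reverse] at h1'
    exact h1'
  have hsP : ∀ i, s i ∈ pl (D1 (i+1)) := fun i => by
    obtain ⟨hu, hv, hum, hvm, h1, h2, h3, h4, h5⟩ := hSDs i
    have h2' : s i ∈ pl (swap1 i) := h2
    rw [pl_flip_eq HU (D1 (i+1)) (swap1 i), List.mem_reverse] at h2'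
    exact h2'
  -- derived reachability facts
  have hAM1 : ∀ i, ReflTransGen T (a i) (m i) := fun i => (mem_pl_rtg (D1 i) (hmP i)).1
  have hAM2 : ∀ i, ReflTransGen T (a (i+1)) (m i) := fun i => (mem_pl_rtg (D2 i) (hmQ i)).1
  have hMB : ∀ i, ReflTransGen T (m i) (b i) := fun i => (mem_pl_rtg (D2 i) (hmQ i)).2
  have hAS : ∀ i, ReflTransGen T (a (i+1)) (s i) := fun i => (mem_pl_rtg (D2 i) (hsQ i)).1
  -- no-star
  have hstar : ∀ i j, ¬ ReflTransGen T (m i) (s j) := by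
    intro i j hpath
    obtain ⟨hu, hv, hum, hvm, h1, h2, hpen, hT1, hT2⟩ := hMDs i
    obtain ⟨hu', hv', hum', hvm', h1', h2', hpen', hT1', hT2'⟩ := hSDs j
    exact hunstarred ⟨m i, s j, _, _, _, _, hpen, hT1, hT2, hpen', hT1', hT2', hpath⟩
  have hSMc : ∀ i, ReflTransGen T (s i) (m i) := fun i =>
    (mem_order (D2 i) (hsQ i) (hmQ i)).resolve_right (hstar i i)
  have hSMc_ne : ∀ i, s i ≠ m i := by
    intro i h
    apply hstar i i
    rw [← h]
  have hSMe : ∀ i, ReflTransGen T (s i) (m (i+1)) := fun i =>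
    (mem_order (D1 (i+1)) (hsP i) (hmP (i+1))).resolve_right (hstar (i+1) i)
  have hSMe_ne : ∀ i, s i ≠ m (i+1) := by
    intro i h
    apply hstar (i+1) i
    rw [← h]
  -- junction inequalities
  have Jm : ∀ i, pen (pl (hSMe i)) (m (i+1)) ≠ pen (pl (hSMc (i+1))) (m (i+1)) := by
    intro i
    have e1 : pen (pl ((hAS i).trans (hSMe i))) (m (i+1)) = pen (pl (hSMe i)) (m (i+1)) :=
      pen_compat HU (hAS i) (hSMe i) (hSMe_ne i)
    have e2 : pen (pl ((hAS (i+1)).trans (hSMc (i+1)))) (m (i+1)) =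
        pen (pl (hSMc (i+1))) (m (i+1)) :=
      pen_compat HU (hAS (i+1)) (hSMc (i+1)) (hSMc_ne (i+1))
    obtain ⟨hu, hv, hum, hvm, h1, h2, hpen, hT1, hT2⟩ := hMDs (i+1)
    rw [← e1, ← e2]
    exact hpen
  have Js : ∀ i, pen ((pl (hSMc i)).reverse) (s i) ≠ pen ((pl (hSMe i)).reverse) (s i) := by
    intro i
    have hfc : ReflTransGen (flip T) (m i) (s i) := (hSMc i).swap
    have hfe : ReflTransGen (flip T) (m (i+1)) (s i) := (hSMe i).swap
    have hbm1 : ReflTransGen (flip T) (b i) (m i) := (hMB i).swap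
    have hbm2 : ReflTransGen (flip T) (b (i+1)) (m (i+1)) :=
      ((mem_pl_rtg (D1 (i+1)) (hmP (i+1))).2).swap
    have e1 : pen (pl (hbm1.trans hfc)) (s i) = pen (pl hfc) (s i) :=
      pen_compat HUf hbm1 hfc (fun h => hSMc_ne i h.symm)
    have e2 : pen (pl (hbm2.trans hfe)) (s i) = pen (pl hfe) (s i) :=
      pen_compat HUf hbm2 hfe (fun h => hSMe_ne i h.symm)
    rw [pl_flip_eq HU (hSMc i) hfc] at e1
    rw [pl_flip_eq HU (hSMe i) hfe] at e2
    obtain ⟨hu, hv, hum, hvm, h1, h2, hpen, hT1, hT2⟩ := hSDs i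
    rw [← e1, ← e2]
    exact hpen
  -- lengths
  have hlenC : ∀ i, 2 ≤ (pl (hSMc i)).length := fun i => pl_len_two _ (hSMc_ne i)
  have hlenE : ∀ i, 2 ≤ (pl (hSMe i)).length := fun i => pl_len_two _ (hSMe_ne i)
  have hredC : ∀ i, Red ((pl (hSMc i)).reverse) := fun i =>
    red_reverse (red_of_chainT hirr hasymm (pl_chain' _))
  have hredE : ∀ i, Red (pl (hSMe i)) := fun i => red_of_chainT hirr hasymm (pl_chain' _)
  -- step: append the reversed descending segment
  have hstep : ∀ (j : ℕ) (A X : List V),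
      A.Chain' (fun x y => T x y ∨ T y x) → Red A → A.head? = some (s 0) →
      A.getLast? = some (m (j+1)) →
      A = X ++ [pen (pl (hSMe j)) (m (j+1)), m (j+1)] →
      ∃ W X', W.Chain' (fun x y => T x y ∨ T y x) ∧ Red W ∧ W.head? = some (s 0) ∧
        W.getLast? = some (s (j+1)) ∧
        W = X' ++ [pen ((pl (hSMc (j+1))).reverse) (s (j+1)), s (j+1)] := by
    intro j A X hcA hrA hhA hlA hendA
    obtain ⟨M, hBdec⟩ := decomp_reverse (hlenC (j+1)) (pl_getLast? (hSMc (j+1))) (m (j+1))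
    have hAne : A ≠ [] := by rw [hendA]; simp
    have hBne : (pl (hSMc (j+1))).reverse ≠ [] := by rw [hBdec]; simp
    have hgl : A.getLast? = ((pl (hSMc (j+1))).reverse).head? := by
      rw [hlA, hBdec]; rfl
    have hWeq : A ++ ((pl (hSMc (j+1))).reverse).tail =
        A.dropLast ++ (pl (hSMc (j+1))).reverse := append_tail_eq hAne hgl
    obtain ⟨Y, hYdec⟩ := decomp_reverse_end (hlenC (j+1)) (pl_head (hSMc (j+1))) (s (j+1))
    refine ⟨A ++ ((pl (hSMc (j+1))).reverse).tail, A.dropLast ++ Y, ?_, ?_, ?_, ?_, ?_⟩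
    · apply hcA.append
      · exact (List.isChain_reverse.mpr ((pl_chain' (hSMc (j+1))).imp
          (fun _ _ hxy => Or.inr hxy))).tail
      · intro x hx y hy
        rw [hlA] at hx
        simp only [Option.mem_some_iff] at hx
        subst hx
        rw [hBdec] at hy
        simp only [List.tail_cons, List.head?_cons, Option.mem_some_iff] at hy
        subst hy
        exact Or.inr (pen_rel (hSMc (j+1)) (hSMc_ne (j+1)))
    · exact red_glue hendA hBdec (Jm j) hrA (hredC (j+1))
    · rw [head?_append_left hAne, hhA]
    · rw [hWeq, List.getLast?_append_of_ne_nil _ hBne, List.getLast?_reverse, pl_head]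
    · conv_lhs => rw [hWeq, hYdec]
      rw [← List.append_assoc]
  -- the inductive construction of the closed walk
  have hInv : ∀ j : ℕ, ∃ W X', W.Chain' (fun x y => T x y ∨ T y x) ∧ Red W ∧
      W.head? = some (s 0) ∧ W.getLast? = some (s (j+1)) ∧
      W = X' ++ [pen ((pl (hSMc (j+1))).reverse) (s (j+1)), s (j+1)] := by
    intro j
    induction j with
    | zero =>
      obtain ⟨X, hX⟩ := decomp_pen (hlenE 0) (pl_getLast? (hSMe 0)) (m 1)
      exact hstep 0 (pl (hSMe 0)) X
        ((pl_chain' (hSMe 0)).imp (fun _ _ hxy => Or.inl hxy)) (hredE 0)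
        (pl_head (hSMe 0)) (pl_getLast? (hSMe 0)) hX
    | succ n ih =>
      obtain ⟨W, X', hc, hr, hh, hl, hend⟩ := ih
      obtain ⟨M, hEdec⟩ := decomp_second (hlenE (n+1)) (pl_head (hSMe (n+1))) (s (n+1))
      have hWne : W ≠ [] := by rw [hend]; simp
      have hEne : pl (hSMe (n+1)) ≠ [] := pl_ne _
      have hgl : W.getLast? = (pl (hSMe (n+1))).head? := by
        rw [hl, pl_head]
      have hWeq : W ++ (pl (hSMe (n+1))).tail = W.dropLast ++ pl (hSMe (n+1)) :=
        append_tail_eq hWne hgl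
      obtain ⟨X2, hX2⟩ := decomp_pen (hlenE (n+1)) (pl_getLast? (hSMe (n+1))) (m (n+2))
      apply hstep (n+1) (W ++ (pl (hSMe (n+1))).tail) (W.dropLast ++ X2)
      · apply hc.append ((pl_chain' (hSMe (n+1))).imp (fun _ _ hxy => Or.inl hxy)).tail
        intro x hx y hy
        rw [hl] at hx
        simp only [Option.mem_some_iff] at hx
        subst hx
        rw [hEdec] at hy
        simp only [List.tail_cons, List.head?_cons, Option.mem_some_iff] at hy
        subst hy
        have := pl_chain' (hSMe (n+1))
        rw [hEdec] at this
        exact Or.inl (List.isChain_cons_cons.mp this).1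
      · exact red_glue hend hEdec (Js (n+1)) hr (hredE (n+1))
      · rw [head?_append_left hWne, hh]
      · rw [hWeq, List.getLast?_append_of_ne_nil _ hEne, pl_getLast?]
      · conv_lhs => rw [hWeq, hX2]
        rw [← List.append_assoc]
  -- conclude
  obtain ⟨W, X', hc, hr, hh, hl, hend⟩ := hInv (k - 1)
  have hkk : k - 1 + 1 = k := by omega
  rw [hkk, hsper] at hl
  apply closed_contradiction htree hirr hc hh hl ?_ hr
  rw [hend]
  simp
end part6
section part7
variable {V : Type*} {R : V → V → Prop}

theorem chain_snoc {a x : V} {l : List V} (hc : List.Chain R a l)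
    (hx : R ((a :: l).getLast (by simp)) x) : List.Chain R a (l ++ [x]) := by
  induction l generalizing a with
  | nil => exact List.Chain.cons (by simpa using hx) List.Chain.nil
  | cons b t ih =>
    have hc' := List.isChain_cons_cons.mp hc
    refine List.Chain.cons hc'.1 (ih hc'.2 ?_)
    rw [List.getLast_cons_cons] at hx
    exact hx

theorem get_congr (L : List V) {i j : ℕ} (hi : i < L.length) (hj : j < L.length)
    (h : i = j) : L.get ⟨i, hi⟩ = L.get ⟨j, hj⟩ := by subst h; rfl

theorem getLast_congr {L1 L2 : List V} (h : L1 = L2) (h1 : L1 ≠ []) :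
    L1.getLast h1 = L2.getLast (h ▸ h1) := by subst h; rfl

theorem chain_to_cyclic {a : V} {l : List V} (hl : l ≠ [])
    (hc : List.Chain R a l) (hlast : (a :: l).getLast (by simp) = a) :
    ∃ f : ℕ → V, (∀ i, R (f i) (f (i + 1))) ∧ (∀ i, f (i + l.length) = f i) := by
  set L := a :: l with hL
  set n := l.length with hn
  have hn1 : 1 ≤ n := by
    cases l with
    | nil => exact absurd rfl hl
    | cons c t => simp [hn]
  have hlen : L.length = n + 1 := by simp [hL, hn]
  have hget : ∀ (i : ℕ) (h : i < n), R (L.get ⟨i, by omega⟩) (L.get ⟨i + 1, by omega⟩) := by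
    have := List.isChain_iff_getElem.mp (show L.Chain' R from hc)
    intro i hi
    exact this i (by omega)
  have hlastget : L.get ⟨n, by omega⟩ = a := by
    have h1 : L.getLast (by simp [hL]) = a := hlast
    rw [List.getLast_eq_getElem] at h1
    rw [← h1]
    exact get_congr L _ _ (by omega)
  refine ⟨fun i => L.get ⟨i % n, by have := Nat.mod_lt i hn1; omega⟩, ?_, ?_⟩
  · intro i
    show R (L.get ⟨i % n, by have := Nat.mod_lt i hn1; omega⟩)
      (L.get ⟨(i + 1) % n, by have := Nat.mod_lt (i + 1) hn1; omega⟩)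
    have hjn : i % n < n := Nat.mod_lt i hn1
    have hmod : (i + 1) % n = (i % n + 1) % n := by
      rw [Nat.add_mod i 1 n, Nat.add_mod (i % n) 1 n, Nat.mod_mod_of_dvd]
      exact dvd_refl n
    rcases Nat.lt_or_ge (i % n + 1) n with h1 | h2
    · have he : (i + 1) % n = i % n + 1 := by rw [hmod, Nat.mod_eq_of_lt h1]
      rw [get_congr L (i := (i + 1) % n) (j := i % n + 1) (hi := by omega) (hj := by omega) he]
      exact hget (i % n) hjn
    · have hjn2 : i % n + 1 = n := by omega
      have he : (i + 1) % n = 0 := by rw [hmod, hjn2, Nat.mod_self]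
      rw [get_congr L (i := (i + 1) % n) (j := 0) (hi := by omega) (hj := by omega) he]
      have hg := hget (i % n) hjn
      have e2 : L.get ⟨i % n + 1, by omega⟩ = L.get ⟨0, by omega⟩ := by
        rw [get_congr L (i := i % n + 1) (j := n) (hi := by omega) (hj := by omega) hjn2,
          hlastget]
        rfl
      rw [e2] at hg
      exact hg
  · intro i
    exact get_congr L _ _ (Nat.add_mod_right i n)

theorem seg_chain (g : ℕ → V) (hg : ∀ i, R (g i) (g (i + 1))) :
    ∀ (e s : ℕ), List.Chain R (g s) ((List.range e).map (fun t => g (s + 1 + t))) := by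
  intro e
  induction e with
  | zero => intro s; simp [List.Chain]
  | succ e ih =>
    intro s
    rw [List.range_succ_eq_map, List.map_cons, List.map_map]
    refine List.Chain.cons (by simpa using hg s) ?_
    have heq : ((fun t => g (s + 1 + t)) ∘ (· + 1)) = (fun t => g (s + 1 + 1 + t)) := by
      funext t
      simp only [Function.comp]
      congr 1
      omega
    rw [heq]
    exact ih (s + 1)

theorem seg_last (g : ℕ → V) :
    ∀ (e s : ℕ), ((g s) :: (List.range e).map (fun t => g (s + 1 + t))).getLast (by simp) =
      g (s + e) := by
  intro e
  induction e with
  | zero => intro s; simp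
  | succ e ih =>
    intro s
    rw [List.range_succ_eq_map, List.map_cons, List.map_map]
    have heq : ((fun t => g (s + 1 + t)) ∘ (· + 1)) = (fun t => g (s + 1 + 1 + t)) := by
      funext t
      simp only [Function.comp]
      congr 1
      omega
    rw [List.getLast_cons_cons, heq]
    have := ih (s + 1)
    rw [show g (s + 1 + 0) = g (s + 1) by norm_num] at *
    rw [show s + 1 + e = s + (e + 1) by omega] at this
    cases e with
    | zero => simpa using this
    | succ e' =>
      rw [List.range_succ_eq_map, List.map_cons] at this ⊢
      rw [List.getLast_cons_cons] at this ⊢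
      exact this

theorem splice_cycle (g : ℕ → V) (hg : ∀ i, R (g i) (g (i + 1))) {s e : ℕ} (hse : s < e)
    (heq : g e = g s) : ∃ f : ℕ → V, (∀ i, R (f i) (f (i + 1))) ∧ (∀ i, f (i + (e - s)) = f i) := by
  have hlen : ((List.range (e - s)).map (fun t => g (s + 1 + t))).length = e - s := by simp
  have h := chain_to_cyclic (a := g s) (l := (List.range (e - s)).map (fun t => g (s + 1 + t)))
    (by simp; omega) (seg_chain g hg (e - s) s) (by
      rw [seg_last g (e - s) s]
      rw [show s + (e - s) = e by omega]
      exact heq)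
  rwa [hlen] at h

theorem splice_cycle_jump (g : ℕ → V) (hg : ∀ i, R (g i) (g (i + 1))) {s e : ℕ} (hse : s ≤ e)
    (hjump : R (g e) (g s)) :
    ∃ f : ℕ → V, (∀ i, R (f i) (f (i + 1))) ∧ (∀ i, f (i + (e - s + 1)) = f i) := by
  have hlen : (((List.range (e - s)).map (fun t => g (s + 1 + t))) ++ [g s]).length = e - s + 1 := by
    simp
  have hch : List.Chain R (g s) (((List.range (e - s)).map (fun t => g (s + 1 + t))) ++ [g s]) := by
    apply chain_snoc (seg_chain g hg (e - s) s)
    rw [seg_last g (e - s) s, show s + (e - s) = e by omega]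
    exact hjump
  have h := chain_to_cyclic (a := g s)
    (l := ((List.range (e - s)).map (fun t => g (s + 1 + t))) ++ [g s]) (by simp) hch (by
      rw [getLast_congr (show (g s :: ((List.range (e - s)).map (fun t => g (s + 1 + t)) ++ [g s])) =
        ((g s :: (List.range (e - s)).map (fun t => g (s + 1 + t))) ++ [g s]) by simp)]
      exact List.getLast_concat)
  rwa [hlen] at h

end part7

section part8
open SimpleGraph
variable {V : Type*} {T : V → V → Prop}

theorem tc_irrefl (htree : (SimpleGraph.fromRel T).IsTree)
    (hirr : ∀ v, ¬ T v v) (hasymm : ∀ u v, T u v → ¬ T v u) :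
    ∀ x, ¬ Relation.TransGen T x x := by
  intro x hx
  obtain ⟨c, hxc, hcx⟩ := (Relation.TransGen.head'_iff).mp hx
  have hchain : (x :: pl hcx).Chain' T := by
    rw [pl_cons hcx]
    exact List.isChain_cons_cons.mpr ⟨hxc, by rw [← pl_cons hcx]; exact pl_chain' hcx⟩
  apply closed_contradiction (W := x :: pl hcx) (s0 := x) htree hirr
    (hchain.imp (fun _ _ h => Or.inl h)) rfl ?_ (by simp [pl]) (red_of_chainT hirr hasymm hchain)
  rw [show (x :: pl hcx) = ([x] ++ pl hcx) by simp,
    List.getLast?_append_of_ne_nil _ (pl_ne hcx), pl_getLast?]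

end part8
end UBA

/-- For an unstarred directed tree `T` (no vertex `u` with two incoming edges admitting a
directed path to a vertex `v` with two outgoing edges), every transitively biclosed
reorientation of `tc(T)` is acyclic. -/
theorem unstarred_biclosed_acyclic {V : Type*} (T : V → V → Prop)
    (htree : (SimpleGraph.fromRel T).IsTree)
    (hirr : ∀ v, ¬ T v v) (hasymm : ∀ u v, T u v → ¬ T v u)
    (hunstarred : ¬ ∃ u v a b d e : V, a ≠ b ∧ T a u ∧ T b u ∧ d ≠ e ∧ T v d ∧ T v e ∧
      Relation.ReflTransGen T u v)
    (rev : V → V → Prop)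
    (hsub : ∀ u v, rev u v → Relation.TransGen T u v)
    (hclosed : ∀ u v w, rev u v → rev v w → rev u w)
    (hcoclosed : ∀ u v w, Relation.TransGen T u v → ¬ rev u v →
      Relation.TransGen T v w → ¬ rev v w → ¬ rev u w) :
    AcyclicRel (reorient (Relation.TransGen T) rev) := by
  classical
  intro v hv
  set R := reorient (Relation.TransGen T) rev with hR_def
  have tcirr := UBA.tc_irrefl htree hirr hasymm
  have tcasymm : ∀ x y, Relation.TransGen T x y → Relation.TransGen T y x → False :=
    fun x y h1 h2 => tcirr x (h1.trans h2)
  have hRasymm : ∀ x y, R x y → R y x → False := by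
    intro x y h1 h2
    rcases h1 with ⟨ha, hb⟩ | ⟨ha, hb⟩ <;> rcases h2 with ⟨hc, hd⟩ | ⟨hc, hd⟩
    · exact tcasymm _ _ ha hc
    · exact hb hd
    · exact hd hb
    · exact tcasymm _ _ ha hc
  have hRirr : ∀ x, ¬ R x x := by
    intro x h
    rcases h with ⟨ha, _⟩ | ⟨ha, _⟩ <;> exact tcirr x ha
  -- extract a periodic cycle
  have hQex : ∃ n : ℕ, 1 ≤ n ∧ ∃ f : ℕ → V,
      (∀ i, R (f i) (f (i + 1))) ∧ (∀ i, f (i + n) = f i) := by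
    obtain ⟨c, hvc, hcv⟩ := Relation.TransGen.head'_iff.mp hv
    have hchain : List.Chain R v (UBA.pl hcv) :=
      List.Chain.cons hvc (UBA.pl_chain' hcv)
    have hlast : (v :: UBA.pl hcv).getLast (by simp) = v := by
      rw [List.getLast_cons (UBA.pl_ne hcv)]
      exact UBA.pl_getLast hcv
    obtain ⟨f, hf, hper⟩ := UBA.chain_to_cyclic (UBA.pl_ne hcv) hchain hlast
    exact ⟨(UBA.pl hcv).length, List.length_pos_iff.mpr (UBA.pl_ne hcv), f, hf, hper⟩
  set n := Nat.find hQex with hn_def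
  obtain ⟨hn1, f0, hf0, hper0⟩ : 1 ≤ n ∧ ∃ f : ℕ → V,
      (∀ i, R (f i) (f (i + 1))) ∧ (∀ i, f (i + n) = f i) := Nat.find_spec hQex
  have hmin : ∀ m, 1 ≤ m → (∃ f : ℕ → V,
      (∀ i, R (f i) (f (i + 1))) ∧ (∀ i, f (i + m) = f i)) → n ≤ m :=
    fun m h1 h2 => Nat.find_le ⟨h1, h2⟩
  -- shortcut and distinctness lemmas
  have hshort : ∀ (g : ℕ → V), (∀ i, R (g i) (g (i + 1))) → (∀ i, g (i + n) = g i) →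
      ∀ i j, i < j → j < i + n → R (g i) (g j) → j = i + 1 := by
    intro g hg hp i j hij hjn hRij
    by_contra hne
    have hjump : R (g (i + n)) (g j) := by rw [hp i]; exact hRij
    obtain ⟨f, hf, hper⟩ := UBA.splice_cycle_jump g hg (le_of_lt hjn) hjump
    have := hmin ((i + n) - j + 1) (by omega) ⟨f, hf, hper⟩
    omega
  have hnodup : ∀ (g : ℕ → V), (∀ i, R (g i) (g (i + 1))) → (∀ i, g (i + n) = g i) →
      ∀ i j, i < j → j < i + n → g i ≠ g j := by
    intro g hg hp i j hij hjn heq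
    have heq2 : g (i + n) = g j := by rw [hp i, heq]
    obtain ⟨f, hf, hper⟩ := UBA.splice_cycle g hg hjn heq2
    have := hmin ((i + n) - j) (by omega) ⟨f, hf, hper⟩
    omega
  -- n ≥ 3
  have hn3 : 3 ≤ n := by
    by_contra hlt
    have h1 : n = 1 ∨ n = 2 := by omega
    rcases h1 with h1 | h1
    · have h2 := hf0 0
      have h3 := hper0 0
      rw [h1] at h3
      rw [show f0 (0 + 1) = f0 1 from rfl] at h3
      rw [h3] at h2
      exact hRirr (f0 0) h2
    · have h2 := hf0 1
      have h3 := hper0 0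
      rw [h1] at h3
      rw [show f0 (0 + 2) = f0 2 from rfl] at h3
      rw [h3] at h2
      exact hRasymm (f0 0) (f0 1) (hf0 0) h2
  -- no two consecutive forward or backward steps
  have hnotFF : ∀ (g : ℕ → V), (∀ i, R (g i) (g (i + 1))) → (∀ i, g (i + n) = g i) → ∀ i,
      (Relation.TransGen T (g i) (g (i + 1)) ∧ ¬ rev (g i) (g (i + 1))) →
      (Relation.TransGen T (g (i + 1)) (g (i + 2)) ∧ ¬ rev (g (i + 1)) (g (i + 2))) →
      False := by
    intro g hg hp i hF1 hF2
    have htc : Relation.TransGen T (g i) (g (i + 2)) := hF1.1.trans hF2.1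
    have hnr : ¬ rev (g i) (g (i + 2)) := hcoclosed _ _ _ hF1.1 hF1.2 hF2.1 hF2.2
    have := hshort g hg hp i (i + 2) (by omega) (by omega) (Or.inl ⟨htc, hnr⟩)
    omega
  have halt2 : ∀ (g : ℕ → V), (∀ i, R (g i) (g (i + 1))) → (∀ i, g (i + n) = g i) → ∀ i,
      (Relation.TransGen T (g (i + 1)) (g i) ∧ rev (g (i + 1)) (g i)) →
      (Relation.TransGen T (g (i + 1)) (g (i + 2)) ∧ ¬ rev (g (i + 1)) (g (i + 2))) := by
    intro g hg hp i hB
    rcases hg (i + 1) with hF1 | hB1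
    · exact hF1
    · exfalso
      have hrev : rev (g (i + 2)) (g i) := hclosed _ _ _ hB1.2 hB.2
      have htc : Relation.TransGen T (g (i + 2)) (g i) := hB1.1.trans hB.1
      have := hshort g hg hp i (i + 2) (by omega) (by omega) (Or.inr ⟨htc, hrev⟩)
      omega
  -- normalize so that step 0 is forward
  obtain ⟨g, hg, hp, hgF0⟩ : ∃ g : ℕ → V, (∀ i, R (g i) (g (i + 1))) ∧
      (∀ i, g (i + n) = g i) ∧
      (Relation.TransGen T (g 0) (g 1) ∧ ¬ rev (g 0) (g 1)) := by
    rcases hf0 0 with hF | hB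
    · exact ⟨f0, hf0, hper0, hF⟩
    · refine ⟨fun i => f0 (i + 1), fun i => hf0 (i + 1), fun i => ?_, halt2 f0 hf0 hper0 0 hB⟩
      have := hper0 (i + 1)
      rw [show i + 1 + n = i + n + 1 by omega] at this
      exact this
  -- forward exactly at even steps
  have hFwd : ∀ i, (Relation.TransGen T (g i) (g (i + 1)) ∧ ¬ rev (g i) (g (i + 1))) ↔
      Even i := by
    intro i
    induction i with
    | zero => exact ⟨fun _ => Even.zero, fun _ => hgF0⟩
    | succ m ih =>
      constructor
      · intro hF1
        rw [Nat.even_add_one]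
        intro hevm
        exact hnotFF g hg hp m (ih.mpr hevm) hF1
      · intro hev
        rw [Nat.even_add_one] at hev
        have hBm := (hg m).resolve_left (fun hF => hev (ih.mp hF))
        exact halt2 g hg hp m hBm
  have hBwd : ∀ i, ¬ Even i →
      (Relation.TransGen T (g (i + 1)) (g i) ∧ rev (g (i + 1)) (g i)) :=
    fun i h => (hg i).resolve_left (fun hF => h ((hFwd i).mp hF))
  -- n is even
  have hneven : Even n := by
    apply (hFwd n).mp
    have h1 : g n = g 0 := by have := hp 0; simpa using this
    have h2 : g (n + 1) = g 1 := by
      have := hp 1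
      rw [show 1 + n = n + 1 by omega] at this
      exact this
    rw [h1, h2]
    exact hgF0
  obtain ⟨k, hk2⟩ := hneven
  have hk : 2 ≤ k := by omega
  -- chord helpers
  have hchord : ∀ i j, i < j → j < i + n → Relation.TransGen T (g i) (g j) →
      ¬ rev (g i) (g j) → j = i + 1 :=
    fun i j h1 h2 htc hnr => hshort g hg hp i j h1 h2 (Or.inl ⟨htc, hnr⟩)
  have hchord2 : ∀ i j, i < j → j < i + n → Relation.TransGen T (g i) (g j) →
      rev (g i) (g j) → i + n = j + 1 := by
    intro i j h1 h2 htc hr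
    have hR : R (g j) (g (i + n)) := by rw [hp i]; exact Or.inr ⟨htc, hr⟩
    exact hshort g hg hp j (i + n) h2 (by omega) hR
  -- apply the tree lemma
  refine UBA.tree_part htree hirr hasymm hunstarred k (by omega)
    (fun i => g (2 * i)) (fun i => g (2 * i + 1)) ?_ ?_ ?_ ?_ ?_ ?_
  · intro i
    show g (2 * (i + k)) = g (2 * i)
    rw [show 2 * (i + k) = 2 * i + n by omega]
    exact hp (2 * i)
  · intro i
    show g (2 * (i + k) + 1) = g (2 * i + 1)
    rw [show 2 * (i + k) + 1 = (2 * i + 1) + n by omega]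
    exact hp (2 * i + 1)
  · intro i
    exact ((hFwd (2 * i)).mpr ⟨i, by omega⟩).1.to_reflTransGen
  · intro i
    show Relation.ReflTransGen T (g (2 * (i + 1))) (g (2 * i + 1))
    rw [show 2 * (i + 1) = 2 * i + 1 + 1 by omega]
    exact (hBwd (2 * i + 1) (by rw [Nat.even_add_one]; exact not_not_intro ⟨i, by omega⟩)).1.to_reflTransGen
  · intro i
    have he1 : (2 : ℕ) * (i + 1) = 2 * i + 2 := by omega
    constructor
    · show ¬ Relation.ReflTransGen T (g (2 * i)) (g (2 * (i + 1)))
      rw [he1]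
      intro h
      rcases Relation.reflTransGen_iff_eq_or_transGen.mp h with heq | htc
      · exact hnodup g hg hp (2 * i) (2 * i + 2) (by omega) (by omega) heq.symm
      · by_cases hr : rev (g (2 * i)) (g (2 * i + 2))
        · have := hchord2 (2 * i) (2 * i + 2) (by omega) (by omega) htc hr
          omega
        · have := hchord (2 * i) (2 * i + 2) (by omega) (by omega) htc hr
          omega
    · show ¬ Relation.ReflTransGen T (g (2 * (i + 1))) (g (2 * i))
      rw [he1]
      intro h
      rcases Relation.reflTransGen_iff_eq_or_transGen.mp h with heq | htc
      · exact hnodup g hg hp (2 * i) (2 * i + 2) (by omega) (by omega) heq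
      · by_cases hr : rev (g (2 * i + 2)) (g (2 * i))
        · have := hshort g hg hp (2 * i) (2 * i + 2) (by omega) (by omega)
            (Or.inr ⟨htc, hr⟩)
          omega
        · have htc' : Relation.TransGen T (g (2 * i + 2)) (g (2 * i + n)) := by
            rw [hp (2 * i)]; exact htc
          have hnr' : ¬ rev (g (2 * i + 2)) (g (2 * i + n)) := by
            rw [hp (2 * i)]; exact hr
          have := hchord (2 * i + 2) (2 * i + n) (by omega) (by omega) htc' hnr'
          omega
  · intro i
    have he1 : (2 : ℕ) * (i + 1) + 1 = 2 * i + 3 := by omega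
    constructor
    · show ¬ Relation.ReflTransGen T (g (2 * i + 1)) (g (2 * (i + 1) + 1))
      rw [he1]
      intro h
      rcases Relation.reflTransGen_iff_eq_or_transGen.mp h with heq | htc
      · exact hnodup g hg hp (2 * i + 1) (2 * i + 3) (by omega) (by omega) heq.symm
      · by_cases hr : rev (g (2 * i + 1)) (g (2 * i + 3))
        · have := hchord2 (2 * i + 1) (2 * i + 3) (by omega) (by omega) htc hr
          omega
        · have := hchord (2 * i + 1) (2 * i + 3) (by omega) (by omega) htc hr
          omega
    · show ¬ Relation.ReflTransGen T (g (2 * (i + 1) + 1)) (g (2 * i + 1))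
      rw [he1]
      intro h
      rcases Relation.reflTransGen_iff_eq_or_transGen.mp h with heq | htc
      · exact hnodup g hg hp (2 * i + 1) (2 * i + 3) (by omega) (by omega) heq
      · by_cases hr : rev (g (2 * i + 3)) (g (2 * i + 1))
        · have := hshort g hg hp (2 * i + 1) (2 * i + 3) (by omega) (by omega)
            (Or.inr ⟨htc, hr⟩)
          omega
        · have htc' : Relation.TransGen T (g (2 * i + 3)) (g (2 * i + 1 + n)) := by
            rw [hp (2 * i + 1)]; exact htc
          have hnr' : ¬ rev (g (2 * i + 3)) (g (2 * i + 1 + n)) := by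
            rw [hp (2 * i + 1)]; exact hr
          have := hchord (2 * i + 3) (2 * i + 1 + n) (by omega) (by omega) htc' hnr'
          omega
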